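/- Let T be a Markov operator on L¹([0,1], λ) that is self-adjoint (∫ (Tψ)·φ dλ = ∫ ψ·(Tφ) dλ for all ψ ∈ L¹ and all bounded measurable φ) and idempotent (T ∘ T = T). Then σ_T = σ*_T and both are equal to the σ-algebra of invariant sets {S ⊆ [0,1] Borel : T𝟙_S = 𝟙_S a.e.}. (This applies in particular to the Markov operator of a non-atomic idempotent copula, since idempotent copulas are symmetric.) -/

import Mathlib

open MeasureTheory Set unitInterval

noncomputable section

open Classical in
/-- The indicator function `𝟙_S` of a set `S ⊆ [0,1]`, as an element of `L¹([0,1], λ)`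
(where `λ` is Lebesgue measure on the unit interval `I = [0,1]`).
If `S` is not measurable we default to `0`. -/
def ind (S : Set I) : Lp ℝ 1 (volume : Measure I) :=
  if hS : MeasurableSet S then indicatorConstLp 1 hS (measure_ne_top _ _) (1:ℝ) else 0

/-- A Markov operator on `L¹([0,1], λ)`: a bounded linear operator `T` with
(i) `T𝟙 = 𝟙`, (ii) `∫ Tψ = ∫ ψ` for all `ψ ∈ L¹`, (iii) `Tψ ≥ 0` a.e. whenever `ψ ≥ 0` a.e. -/
structure IsMarkovOperator
    (T : Lp ℝ 1 (volume : Measure I) →L[ℝ] Lp ℝ 1 (volume : Measure I)) : Prop where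
  map_one : T (ind univ) = ind univ
  integral_map : ∀ ψ : Lp ℝ 1 (volume : Measure I), ∫ x, (T ψ) x = ∫ x, ψ x
  positive : ∀ ψ : Lp ℝ 1 (volume : Measure I), 0 ≤ᵐ[volume] ⇑ψ → 0 ≤ᵐ[volume] ⇑(T ψ)

/-- `σ_T`: the collection of Borel sets `S ⊆ [0,1]` with `T𝟙_S = 𝟙_R` (λ-a.e.) for some Borel
`R ⊆ [0,1]`.  (Equality in `L¹` is exactly λ-a.e. equality.) -/
def sigmaT (T : Lp ℝ 1 (volume : Measure I) →L[ℝ] Lp ℝ 1 (volume : Measure I)) :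
    Set (Set I) :=
  {S | MeasurableSet S ∧ ∃ R : Set I, MeasurableSet R ∧ T (ind S) = ind R}

/-- `σ*_T`: the collection of Borel sets `R ⊆ [0,1]` with `T𝟙_S = 𝟙_R` (λ-a.e.) for some Borel
`S ⊆ [0,1]`. -/
def sigmaTstar (T : Lp ℝ 1 (volume : Measure I) →L[ℝ] Lp ℝ 1 (volume : Measure I)) :
    Set (Set I) :=
  {R | MeasurableSet R ∧ ∃ S : Set I, MeasurableSet S ∧ T (ind S) = ind R}

/-- Let `T` be a Markov operator on `L¹([0,1], λ)` that is self-adjoint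
(`∫ (Tψ)·φ dλ = ∫ ψ·(Tφ) dλ` for all `ψ ∈ L¹` and all bounded measurable `φ`, where
`Tφ` is applied to any `L¹`-representative of `φ`) and idempotent (`T ∘ T = T`).  Then
`σ_T = σ*_T` and both are equal to the σ-algebra of invariant sets
`{S ⊆ [0,1] Borel : T𝟙_S = 𝟙_S a.e.}`. -/
theorem stmt4
    (T : Lp ℝ 1 (volume : Measure I) →L[ℝ] Lp ℝ 1 (volume : Measure I))
    (hT : IsMarkovOperator T)
    (hself : ∀ (ψ : Lp ℝ 1 (volume : Measure I)) (φ : I → ℝ), Measurable φ →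
      (∃ c : ℝ, ∀ x, |φ x| ≤ c) →
      ∀ φL : Lp ℝ 1 (volume : Measure I), ⇑φL =ᵐ[volume] φ →
        ∫ x, (T ψ) x * φ x = ∫ x, ψ x * (T φL) x)
    (hidem : ∀ ψ : Lp ℝ 1 (volume : Measure I), T (T ψ) = T ψ) :
    sigmaT T = sigmaTstar T ∧
    sigmaT T = {S : Set I | MeasurableSet S ∧ T (ind S) = ind S} := by
  classical
  -- basic facts about `ind`
  have ind_coe : ∀ (S : Set I) (hS : MeasurableSet S),
      ⇑(ind S) =ᵐ[volume] S.indicator (fun _ => (1:ℝ)) := by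
    intro S hS
    rw [ind, dif_pos hS]
    exact indicatorConstLp_coeFn
  have ind_int : ∀ (S : Set I) (hS : MeasurableSet S),
      ∫ x, (ind S) x = (volume S).toReal := by
    intro S hS
    rw [integral_congr_ae (ind_coe S hS), integral_indicator_const (1:ℝ) hS]
    simp
    rfl
  -- key: if `T (ind S) = ind R` then `ind S = ind R`
  have key : ∀ (S : Set I), MeasurableSet S → ∀ (R : Set I), MeasurableSet R →
      T (ind S) = ind R → ind S = ind R := by
    intro S hS R hR hTR
    have hTRinv : T (ind R) = ind R := by rw [← hTR, hidem]
    -- measures are equal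
    have hmeas_eq : volume S = volume R := by
      have h := hT.integral_map (ind S)
      rw [hTR, ind_int S hS, ind_int R hR] at h
      exact (ENNReal.toReal_eq_toReal_iff' (measure_ne_top _ _) (measure_ne_top _ _)).mp h.symm
    -- self-adjointness computation
    have hφm : Measurable (R.indicator (fun _ => (1:ℝ))) :=
      measurable_const.indicator hR
    have hφb : ∃ c : ℝ, ∀ x, |R.indicator (fun _ => (1:ℝ)) x| ≤ c := by
      refine ⟨1, fun x => ?_⟩
      by_cases hx : x ∈ R <;> simp [hx]
    have hadj := hself (ind S) (R.indicator (fun _ => (1:ℝ))) hφm hφb (ind R) (ind_coe R hR)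
    rw [hTR, hTRinv] at hadj
    have hL : ∫ x, (ind R) x * R.indicator (fun _ => (1:ℝ)) x = (volume R).toReal := by
      have h1 : (fun x => (ind R) x * R.indicator (fun _ => (1:ℝ)) x)
          =ᵐ[volume] R.indicator (fun _ => (1:ℝ)) := by
        filter_upwards [ind_coe R hR] with x hx
        rw [hx]
        by_cases hxR : x ∈ R <;> simp [hxR]
      rw [integral_congr_ae h1, integral_indicator_const (1:ℝ) hR]
      simp
      rfl
    have hRt : ∫ x, (ind S) x * (ind R) x = (volume (S ∩ R)).toReal := by
      have h1 : (fun x => (ind S) x * (ind R) x)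
          =ᵐ[volume] (S ∩ R).indicator (fun _ => (1:ℝ)) := by
        filter_upwards [ind_coe S hS, ind_coe R hR] with x hx1 hx2
        rw [hx1, hx2]
        by_cases hxS : x ∈ S <;> by_cases hxR : x ∈ R <;>
          simp [hxS, hxR, Set.indicator_apply, Set.mem_inter_iff]
      rw [integral_congr_ae h1, integral_indicator_const (1:ℝ) (hS.inter hR)]
      simp
      rfl
    rw [hL, hRt] at hadj
    have hmRSR : volume R = volume (S ∩ R) :=
      (ENNReal.toReal_eq_toReal_iff' (measure_ne_top _ _) (measure_ne_top _ _)).mp hadj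
    -- conclude `S =ᵐ R`
    have hRS : volume (R \ S) = 0 := by
      have h := measure_diff_add_inter (μ := volume) R hS
      rw [Set.inter_comm R S, ← hmRSR, hmRSR] at h
      exact (ENNReal.add_left_inj (measure_ne_top volume _)).mp
        (h.trans (zero_add _).symm)
    have hSR : volume (S \ R) = 0 := by
      have h := measure_diff_add_inter (μ := volume) S hR
      rw [hmeas_eq, hmRSR] at h
      exact (ENNReal.add_left_inj (measure_ne_top volume _)).mp
        (h.trans (zero_add _).symm)
    have hae : S =ᵐ[volume] R := ae_eq_set.mpr ⟨hSR, hRS⟩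
    refine Lp.ext ?_
    calc ⇑(ind S) =ᵐ[volume] S.indicator (fun _ => (1:ℝ)) := ind_coe S hS
      _ =ᵐ[volume] R.indicator (fun _ => (1:ℝ)) := indicator_ae_eq_of_ae_eq_set hae
      _ =ᵐ[volume] ⇑(ind R) := (ind_coe R hR).symm
  -- σ_T = invariant sets
  have h1 : sigmaT T = {S : Set I | MeasurableSet S ∧ T (ind S) = ind S} := by
    ext S
    constructor
    · rintro ⟨hS, R, hR, hTR⟩
      exact ⟨hS, by rw [hTR, ← key S hS R hR hTR]⟩
    · rintro ⟨hS, hTS⟩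
      exact ⟨hS, S, hS, hTS⟩
  have h2 : sigmaTstar T = {S : Set I | MeasurableSet S ∧ T (ind S) = ind S} := by
    ext R
    constructor
    · rintro ⟨hR, S, hS, hTS⟩
      refine ⟨hR, ?_⟩
      rw [← hTS, hidem, hTS]
    · rintro ⟨hR, hTR⟩
      exact ⟨hR, R, hR, hTR⟩
  exact ⟨h1.trans h2.symm, h1⟩
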